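/- Let L > 0, b > 0 and 0 < a < b + 1, and let w : (0,L) → [0,∞) be measurable. Then the Lebesgue integrals (with values in [0,∞]) satisfy ∫₀^L s^{−a−1} w(s)^{b+1} ds ≥ ((b+1−a)/L^{b+1−a})^{1/b} · ( ∫₀^L s^{−a} w(s)^b ds )^{(b+1)/b}. -/

import Mathlib

open MeasureTheory
open scoped ENNReal

theorem reverse_holder_moment_estimate
    (L b a : ℝ) (hL : 0 < L) (hb : 0 < b) (ha : 0 < a) (hab : a < b + 1)
    (w : ℝ → ℝ) (hw : Measurable w)
    (hwnonneg : ∀ s ∈ Set.Ioo (0:ℝ) L, 0 ≤ w s) :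
    ENNReal.ofReal (((b + 1 - a) / L ^ (b + 1 - a)) ^ (1 / b)) *
      (∫⁻ s in Set.Ioo (0:ℝ) L, ENNReal.ofReal (s ^ (-a) * w s ^ b)) ^ ((b + 1) / b)
    ≤ ∫⁻ s in Set.Ioo (0:ℝ) L, ENNReal.ofReal (s ^ (-a - 1) * w s ^ (b + 1)) := by
  set μ := (volume : Measure ℝ).restrict (Set.Ioo (0:ℝ) L) with hμ
  set c := b + 1 - a with hc
  have hc0 : 0 < c := by rw [hc]; linarith
  set f : ℝ → ℝ≥0∞ := fun s => ENNReal.ofReal (s ^ ((b - a) / (b + 1))) with hf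
  set g : ℝ → ℝ≥0∞ := (fun s =>
    ENNReal.ofReal (s ^ (-a - 1) * w s ^ (b + 1)) ^ (b / (b + 1))) with hg
  have hb1 : (0:ℝ) < b + 1 := by linarith
  have hpq : Real.HolderConjugate (b + 1) ((b + 1) / b) := by
    rw [Real.holderConjugate_iff_eq_conjExponent (by linarith), add_sub_cancel_right]
  -- pointwise identity on Ioo 0 L
  have hpt : ∀ s ∈ Set.Ioo (0:ℝ) L,
      ENNReal.ofReal (s ^ (-a) * w s ^ b) = f s * g s := by
    intro s hs
    have hs0 : 0 < s := hs.1
    have hws : 0 ≤ w s := hwnonneg s hs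
    have key : s ^ (-a) * w s ^ b
        = s ^ ((b - a) / (b + 1)) * (s ^ (-a - 1) * w s ^ (b + 1)) ^ (b / (b + 1)) := by
      rw [Real.mul_rpow (Real.rpow_nonneg hs0.le _) (Real.rpow_nonneg hws _),
        ← Real.rpow_mul hs0.le, ← Real.rpow_mul hws, ← mul_assoc,
        ← Real.rpow_add hs0]
      congr 1
      · congr 1
        field_simp
        ring
      · congr 1
        field_simp
    simp only [hf, hg]
    rw [key, ENNReal.ofReal_mul (Real.rpow_nonneg hs0.le _),
      ← ENNReal.ofReal_rpow_of_nonneg (mul_nonneg (Real.rpow_nonneg hs0.le _)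
        (Real.rpow_nonneg hws _)) (by positivity)]
  have hmeas_pow : Measurable fun s : ℝ => ENNReal.ofReal (s ^ (-a - 1) * w s ^ (b + 1)) := by
    apply Measurable.ennreal_ofReal; fun_prop
  have hmf : Measurable f := by
    rw [hf]; apply Measurable.ennreal_ofReal; fun_prop
  have hmg : Measurable g := by
    rw [hg]; exact hmeas_pow.pow_const _
  have holder := ENNReal.lintegral_mul_le_Lp_mul_Lq μ hpq
    (f := f) (g := g) hmf.aemeasurable hmg.aemeasurable
  -- rewrite the three integrals
  have hfg : ∫⁻ s, (f * g) s ∂μ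
      = ∫⁻ s in Set.Ioo (0:ℝ) L, ENNReal.ofReal (s ^ (-a) * w s ^ b) := by
    rw [hμ]
    apply lintegral_congr_ae
    filter_upwards [ae_restrict_mem measurableSet_Ioo] with s hs
    exact (hpt s hs).symm
  have hfp : ∫⁻ s, f s ^ (b + 1) ∂μ = ENNReal.ofReal (L ^ c / c) := by
    have h1 : ∫⁻ s, f s ^ (b + 1) ∂μ
        = ∫⁻ s in Set.Ioo (0:ℝ) L, ENNReal.ofReal (s ^ (b - a)) := by
      rw [hμ]
      apply lintegral_congr_ae
      filter_upwards [ae_restrict_mem measurableSet_Ioo] with s hs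
      simp only [hf]
      rw [ENNReal.ofReal_rpow_of_nonneg (Real.rpow_nonneg hs.1.le _) hb1.le,
        ← Real.rpow_mul hs.1.le, div_mul_cancel₀ _ hb1.ne']
    rw [h1]
    have hint : IntervalIntegrable (fun s : ℝ => s ^ (b - a)) volume 0 L :=
      intervalIntegral.intervalIntegrable_rpow' (by linarith)
    have heq : ∫ s in (0:ℝ)..L, s ^ (b - a) = L ^ c / c := by
      rw [integral_rpow (Or.inl (by linarith))]
      rw [Real.zero_rpow (by linarith : b - a + 1 ≠ 0)]
      rw [hc]
      ring_nf
    rw [← ofReal_integral_eq_lintegral_ofReal]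
    · rw [← heq, intervalIntegral.integral_of_le hL.le,
        ← MeasureTheory.integral_Ioc_eq_integral_Ioo]
    · exact ((intervalIntegrable_iff_integrableOn_Ioo_of_le hL.le).mp hint)
    · filter_upwards [ae_restrict_mem measurableSet_Ioo] with s hs
      exact Real.rpow_nonneg hs.1.le _
  have hgq : ∫⁻ s, g s ^ ((b + 1) / b) ∂μ
      = ∫⁻ s in Set.Ioo (0:ℝ) L, ENNReal.ofReal (s ^ (-a - 1) * w s ^ (b + 1)) := by
    rw [hμ]
    apply lintegral_congr
    intro s
    simp only [hg]
    rw [← ENNReal.rpow_mul, div_mul_div_comm, mul_comm b (b+1),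
      div_self (by positivity : (b+1)*b ≠ 0), ENNReal.rpow_one]
  rw [hfg, hfp, hgq] at holder
  set I := ∫⁻ s in Set.Ioo (0:ℝ) L, ENNReal.ofReal (s ^ (-a) * w s ^ b) with hI
  set J := ∫⁻ s in Set.Ioo (0:ℝ) L, ENNReal.ofReal (s ^ (-a - 1) * w s ^ (b + 1)) with hJ
  have hLc : (0:ℝ) < L ^ c := Real.rpow_pos_of_pos hL _
  have step : I ^ ((b + 1) / b) ≤ ENNReal.ofReal (L ^ c / c) ^ (1 / b) * J := by
    calc I ^ ((b + 1) / b)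
        ≤ (ENNReal.ofReal (L ^ c / c) ^ (1 / (b + 1)) * J ^ (1 / ((b + 1) / b))) ^ ((b + 1) / b) :=
          ENNReal.rpow_le_rpow holder (by positivity)
      _ = ENNReal.ofReal (L ^ c / c) ^ (1 / b) * J := by
          rw [ENNReal.mul_rpow_of_nonneg _ _ (by positivity), ← ENNReal.rpow_mul,
            ← ENNReal.rpow_mul]
          congr 1
          · congr 1
            field_simp
          · rw [one_div, inv_div, div_mul_div_comm, mul_comm b (b+1),
              div_self (by positivity : (b+1)*b ≠ 0), ENNReal.rpow_one]
  have cancel : ENNReal.ofReal ((c / L ^ c) ^ (1 / b)) * ENNReal.ofReal (L ^ c / c) ^ (1 / b)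
      = 1 := by
    rw [ENNReal.ofReal_rpow_of_nonneg (by positivity : (0:ℝ) ≤ L ^ c / c)
        (by positivity : (0:ℝ) ≤ 1 / b),
      ← ENNReal.ofReal_mul (by positivity),
      ← Real.mul_rpow (by positivity) (by positivity),
      show c / L ^ c * (L ^ c / c) = 1 by field_simp,
      Real.one_rpow, ENNReal.ofReal_one]
  calc ENNReal.ofReal ((c / L ^ c) ^ (1 / b)) * I ^ ((b + 1) / b)
      ≤ ENNReal.ofReal ((c / L ^ c) ^ (1 / b)) * (ENNReal.ofReal (L ^ c / c) ^ (1 / b) * J) :=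
        mul_le_mul_right step _
    _ = (ENNReal.ofReal ((c / L ^ c) ^ (1 / b)) * ENNReal.ofReal (L ^ c / c) ^ (1 / b)) * J := by
        ring
    _ = J := by rw [cancel, one_mul]
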